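/- For the saddle point problem min_x max_y xy on ℝ×ℝ and the linear fixed-point map T_P : ℝ² → ℝ² given by the matrix T_P = [[γ²−3γ+1, 2−γ],[γ²−2γ, 1−γ]], both eigenvalues of T_P are λ = γ²/2 − 2γ + 1 ± (γ/2 − 1)√(γ(γ−4)), and for every γ ∈ (0,4) these (complex) eigenvalues have modulus exactly 1. -/

import Mathlib

/-- For the linear fixed-point map `T_P = [[γ²−3γ+1, 2−γ],[γ²−2γ, 1−γ]]` arising from the
saddle point problem `min_x max_y xy`, both eigenvalues (roots of the characteristic
polynomial over `ℂ`) are `λ = γ²/2 − 2γ + 1 ± (γ/2 − 1)√(γ(γ−4))`, and for every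
`γ ∈ (0,4)` these complex eigenvalues have modulus exactly `1`. -/
theorem stmt15 (γ : ℝ) (hγ : γ ∈ Set.Ioo (0:ℝ) 4)
    (TP : Matrix (Fin 2) (Fin 2) ℂ)
    (hTP : TP = !![((γ:ℂ)^2 - 3*(γ:ℂ) + 1), (2 - (γ:ℂ)); ((γ:ℂ)^2 - 2*(γ:ℂ)), (1 - (γ:ℂ))])
    (lamPlus lamMinus : ℂ)
    (hlp : lamPlus = ((γ:ℂ)^2/2 - 2*(γ:ℂ) + 1) +
        ((γ:ℂ)/2 - 1) * (((γ:ℂ) * ((γ:ℂ) - 4)) ^ ((1:ℂ)/2)))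
    (hlm : lamMinus = ((γ:ℂ)^2/2 - 2*(γ:ℂ) + 1) -
        ((γ:ℂ)/2 - 1) * (((γ:ℂ) * ((γ:ℂ) - 4)) ^ ((1:ℂ)/2))) :
    (TP.charpoly.IsRoot lamPlus ∧ TP.charpoly.IsRoot lamMinus) ∧
      ‖lamPlus‖ = 1 ∧ ‖lamMinus‖ = 1 := by
  obtain ⟨h0, h4⟩ := hγ
  set z : ℂ := ((γ:ℂ) * ((γ:ℂ) - 4)) ^ ((1:ℂ)/2) with hzdef
  have hwne : γ * (γ - 4) ≠ 0 := by nlinarith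
  have hne : (γ:ℂ) * ((γ:ℂ) - 4) ≠ 0 := by
    rw [show (γ:ℂ) * ((γ:ℂ) - 4) = ((γ*(γ-4):ℝ):ℂ) by push_cast; ring]
    exact Complex.ofReal_ne_zero.mpr hwne
  have hz2 : z ^ 2 = (γ:ℂ) * ((γ:ℂ) - 4) := by
    rw [hzdef, show (1:ℂ)/2 = ((2:ℕ):ℂ)⁻¹ by norm_num]
    exact Complex.cpow_nat_inv_pow _ two_ne_zero
  have hre' : z.re ^ 2 - z.im ^ 2 = γ * (γ - 4) := by
    have := congrArg Complex.re hz2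
    simpa [pow_two, Complex.mul_re] using this
  have him' : z.re * z.im + z.im * z.re = 0 := by
    have := congrArg Complex.im hz2
    simpa [pow_two, Complex.mul_im] using this
  have hzre : z.re = 0 := by
    rcases mul_eq_zero.mp (show z.re * z.im = 0 by linarith) with h | h
    · exact h
    · exfalso; rw [h] at hre'; nlinarith
  have hzim2 : z.im ^ 2 = -(γ * (γ - 4)) := by rw [hzre] at hre'; nlinarith
  constructor
  · rw [hTP]
    constructor <;>
    · simp only [Polynomial.IsRoot, Matrix.charpoly, Matrix.det_fin_two,
        Matrix.charmatrix_apply, Matrix.diagonal_apply, Matrix.cons_val',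
        Matrix.cons_val_zero, Matrix.cons_val_one, Matrix.head_cons, Matrix.head_fin_const,
        Matrix.of_apply, Matrix.empty_val', Matrix.cons_val_fin_one, Polynomial.eval_sub,
        Polynomial.eval_mul, Polynomial.eval_X, Polynomial.eval_C]
      norm_num
      (try rw [hlp]); (try rw [hlm])
      linear_combination ((γ:ℂ)/2 - 1)^2 * hz2
  · have key : ∀ s : ℂ, (s = ((γ:ℂ)^2/2 - 2*(γ:ℂ) + 1) + ((γ:ℂ)/2 - 1) * z ∨
        s = ((γ:ℂ)^2/2 - 2*(γ:ℂ) + 1) - ((γ:ℂ)/2 - 1) * z) → ‖s‖ = 1 := by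
      intro s hs
      have h1 : ‖s‖ ^ 2 = 1 := by
        rw [Complex.sq_norm, Complex.normSq_apply]
        have hsre : s.re = γ^2/2 - 2*γ + 1 := by
          rcases hs with h | h <;>
          · rw [h]
            simp [pow_two, Complex.add_re, Complex.sub_re, Complex.mul_re, hzre]
        have hsim : s.im * s.im = (γ/2 - 1)^2 * z.im^2 := by
          rcases hs with h | h <;>
          · rw [h]
            simp [pow_two, Complex.add_im, Complex.sub_im, Complex.mul_im,
              Complex.mul_re, hzre]
            ring
        rw [hsre, hsim, hzim2]
        ring
      nlinarith [norm_nonneg s, h1]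
    exact ⟨key _ (Or.inl hlp), key _ (Or.inr hlm)⟩
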